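/- For a commutative ring R and a finitely presented R-module M, the natural map M ⊗_R R[[X]] → M[[X]] sending m ⊗ f to the formal power series with coefficients (coefficient of f)·m is an isomorphism of R[[X]]-modules. -/

import Mathlib

open scoped TensorProduct

/-- The natural `R`-linear map `R[[X]] ⊗_R M → M[[X]]` sending `f ⊗ m` to the power
series with `k`-th coefficient `(coeff k f) • m`.  Here `M[[X]]` is realized as the
module of coefficient sequences `ℕ → M`. -/
noncomputable def tensorPowerSeriesToSeries (R M : Type*) [CommRing R] [AddCommGroup M]
    [Module R M] : PowerSeries R ⊗[R] M →ₗ[R] (ℕ → M) :=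
  TensorProduct.lift
    (LinearMap.mk₂ R (fun f m k => PowerSeries.coeff (R := R) k f • m)
      (by intro f f' m; funext k; simp [add_smul]
        )
      (by intro c f m; funext k; simp [mul_smul]
        )
      (by intro f m m'; funext k; simp [smul_add]
        )
      (by intro c f m; funext k; exact smul_comm _ _ _
        ))

/-- The Cauchy-product action of a power series `f ∈ R[[X]]` on a power series
`g ∈ M[[X]]` with coefficients in an `R`-module `M`. -/
noncomputable def cauchySMul {R M : Type*} [CommRing R] [AddCommGroup M] [Module R M]
    (f : PowerSeries R) (g : ℕ → M) : ℕ → M :=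
  fun k => ∑ p ∈ Finset.HasAntidiagonal.antidiagonal k, PowerSeries.coeff (R := R) p.1 f • g p.2


section Aux

variable {R : Type*} [CommRing R]

lemma tps_tmul {M : Type*} [AddCommGroup M] [Module R M] (f : PowerSeries R) (m : M) :
    tensorPowerSeriesToSeries R M (f ⊗ₜ m) = fun k => PowerSeries.coeff (R := R) k f • m := rfl

lemma tps_compLeft_apply {M N : Type*} [AddCommGroup M] [Module R M] [AddCommGroup N]
    [Module R N] (g : M →ₗ[R] N) (h : ℕ → M) (k : ℕ) :
    LinearMap.compLeft g ℕ h k = g (h k) := rfl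

/-- The linear equivalence between `R[[X]]` and its coefficient sequences. -/
noncomputable def coeffEquiv (R : Type*) [CommRing R] : PowerSeries R ≃ₗ[R] (ℕ → R) where
  toFun f k := PowerSeries.coeff (R := R) k f
  map_add' f g := by funext k; simp
  map_smul' r f := by funext k; simp
  invFun := PowerSeries.mk
  left_inv f := by ext k; simp
  right_inv g := by funext k; simp

/-- Swapping the two function arguments, as a linear equivalence. -/
def swapEquiv (R : Type*) [CommRing R] (ι : Type*) :
    (ι → ℕ → R) ≃ₗ[R] (ℕ → ι → R) where
  toFun g k i := g i k
  map_add' _ _ := rfl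
  map_smul' _ _ := rfl
  invFun g i k := g k i
  left_inv _ := rfl
  right_inv _ := rfl

lemma tps_pi_eq (ι : Type*) [Fintype ι] [DecidableEq ι] :
    tensorPowerSeriesToSeries R (ι → R) =
      ((TensorProduct.piScalarRight R R (PowerSeries R) ι).trans
        ((LinearEquiv.piCongrRight (fun _ : ι => coeffEquiv R)).trans
          (swapEquiv R ι))).toLinearMap := by
  apply TensorProduct.ext'
  intro f v
  funext k
  ext i
  simp [tps_tmul, coeffEquiv, swapEquiv, mul_comm, smul_eq_mul]

lemma tps_pi_bijective (ι : Type*) [Fintype ι] :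
    Function.Bijective (tensorPowerSeriesToSeries R (ι → R)) := by
  classical
  rw [tps_pi_eq]
  exact LinearEquiv.bijective _

lemma tps_natural {M N : Type*} [AddCommGroup M] [Module R M] [AddCommGroup N] [Module R N]
    (g : M →ₗ[R] N) :
    (tensorPowerSeriesToSeries R N).comp (LinearMap.lTensor (PowerSeries R) g) =
      (LinearMap.compLeft g ℕ).comp (tensorPowerSeriesToSeries R M) := by
  apply TensorProduct.ext'
  intro f m
  funext k
  simp [tps_tmul, tps_compLeft_apply]

end Aux

/-- For a finitely presented `R`-module `M`, the natural map `M ⊗_R R[[X]] → M[[X]]` is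
an isomorphism of `R[[X]]`-modules: it is bijective and transforms the `R[[X]]`-action
on the tensor product into the Cauchy-product action on `M[[X]]`. -/
theorem tensor_powerSeries_iso_of_finitePresentation (R M : Type*) [CommRing R]
    [AddCommGroup M] [Module R M] [Module.FinitePresentation R M] :
    Function.Bijective (tensorPowerSeriesToSeries R M) ∧
      ∀ (f : PowerSeries R) (x : PowerSeries R ⊗[R] M),
        tensorPowerSeriesToSeries R M (f • x) =
          cauchySMul f (tensorPowerSeriesToSeries R M x) := by
  classical
  constructor
  · obtain ⟨n, π, hπ⟩ := Module.Finite.exists_fin' R M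
    obtain ⟨t, ht⟩ := Module.FinitePresentation.fg_ker π hπ
    set ρ : (↥t → R) →ₗ[R] (Fin n → R) :=
      Fintype.linearCombination R (fun i : ↥t => (i : Fin n → R)) with hρdef
    have hρ : LinearMap.range ρ = LinearMap.ker π := by
      rw [hρdef, Fintype.range_linearCombination, Subtype.range_coe_subtype]
      simpa using ht
    have hcomp : π.comp ρ = 0 := by
      apply LinearMap.ext
      intro v
      have : ρ v ∈ LinearMap.ker π := hρ ▸ LinearMap.mem_range_self ρ v
      simpa using this
    have hsurj : Function.Surjective (tensorPowerSeriesToSeries R M) := by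
      intro g
      choose g' hg' using fun k => hπ (g k)
      obtain ⟨y, hy⟩ := (tps_pi_bijective (Fin n)).2 g'
      refine ⟨LinearMap.lTensor _ π y, ?_⟩
      have := LinearMap.congr_fun (tps_natural π) y
      simp only [LinearMap.comp_apply] at this
      rw [this, hy]
      funext k
      simpa [tps_compLeft_apply] using hg' k
    have hker : ∀ x, tensorPowerSeriesToSeries R M x = 0 → x = 0 := by
      intro x hx
      obtain ⟨y, rfl⟩ := LinearMap.lTensor_surjective (PowerSeries R) hπ x
      have hnat := LinearMap.congr_fun (tps_natural π) y
      simp only [LinearMap.comp_apply] at hnat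
      rw [hx] at hnat
      have hkerk : ∀ k, tensorPowerSeriesToSeries R (Fin n → R) y k ∈ LinearMap.ker π := by
        intro k
        have := congrFun hnat.symm k
        simpa [tps_compLeft_apply] using this
      have hrange : ∀ k, ∃ v : ↥t → R, ρ v = tensorPowerSeriesToSeries R (Fin n → R) y k := by
        intro k
        have := hkerk k
        rw [← hρ] at this
        exact this
      choose z hz using hrange
      obtain ⟨w, hw⟩ := (tps_pi_bijective (↥t)).2 z
      have hyw : y = LinearMap.lTensor (PowerSeries R) ρ w := by
        apply (tps_pi_bijective (Fin n)).1
        have := LinearMap.congr_fun (tps_natural ρ) w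
        simp only [LinearMap.comp_apply] at this
        rw [this, hw]
        funext k
        simp [tps_compLeft_apply, hz k]
      rw [hyw, ← LinearMap.comp_apply, ← LinearMap.lTensor_comp, hcomp,
        LinearMap.lTensor_zero]
      rfl
    refine ⟨fun a b hab => ?_, hsurj⟩
    have : tensorPowerSeriesToSeries R M (a - b) = 0 := by
      rw [map_sub, hab, sub_self]
    have := hker _ this
    exact sub_eq_zero.mp this
  · intro f x
    induction x using TensorProduct.induction_on with
    | zero =>
        simp only [smul_zero, map_zero]
        funext k
        simp [cauchySMul]
    | tmul g m =>
        rw [TensorProduct.smul_tmul']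
        funext k
        simp only [tps_tmul, cauchySMul, smul_eq_mul, PowerSeries.coeff_mul, Finset.sum_smul,
          mul_smul]
    | add a b ha hb =>
        rw [smul_add, map_add, ha, hb, map_add]
        funext k
        simp [cauchySMul, Finset.sum_add_distrib, smul_add]
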